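/- Let n ≥ 2 and l > 0 be such that f : [−l, l] → ℝ is C¹ and satisfies 2·f′(t) + n·f(t)² + n ≤ 0 for all t. Then 2l < 2π/n. Moreover, for every 0 < l₀ < π/n, the function f(t) = −tan(n·t/2) is C¹ on [−l₀, l₀] and satisfies 2·f′(t) + n·f(t)² + n = 0 there; hence the bound 2π/n is sharp. -/

import Mathlib

/-- The normalized case σ = n(n-1) of the band-width Riccati inequality, and
its sharpness via the explicit solution f(t) = -tan(n t / 2). -/
theorem riccati_width_normalized_and_sharp (n : ℕ) (hn : 2 ≤ n) :
    (∀ l : ℝ, 0 < l → ∀ f f' : ℝ → ℝ,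
      (∀ t ∈ Set.Icc (-l) l, HasDerivAt f (f' t) t) →
      ContinuousOn f' (Set.Icc (-l) l) →
      (∀ t ∈ Set.Icc (-l) l,
        2 * f' t + (n : ℝ) * (f t) ^ 2 + (n : ℝ) ≤ 0) →
      2 * l < 2 * Real.pi / n) ∧
    (∀ l₀ : ℝ, 0 < l₀ → l₀ < Real.pi / n →
      ∀ t ∈ Set.Icc (-l₀) l₀,
        HasDerivAt (fun s : ℝ => -Real.tan ((n : ℝ) * s / 2))
          (-((n : ℝ) / 2) * (1 + Real.tan ((n : ℝ) * t / 2) ^ 2)) t ∧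
        2 * (-((n : ℝ) / 2) * (1 + Real.tan ((n : ℝ) * t / 2) ^ 2)) +
          (n : ℝ) * (-Real.tan ((n : ℝ) * t / 2)) ^ 2 + (n : ℝ) = 0) := by
  have hn0 : (0 : ℝ) < n := by positivity
  constructor
  · intro l hl f f' hf hf' hineq
    -- consider g t = arctan (f t) + (n/2) t, antitone on [-l, l]
    set g : ℝ → ℝ := fun t => Real.arctan (f t) + ((n : ℝ) / 2) * t with hg
    have hgd : ∀ t ∈ Set.Icc (-l) l,
        HasDerivAt g (1 / (1 + f t ^ 2) * f' t + (n : ℝ) / 2) t := by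
      intro t ht
      have h1 : HasDerivAt (fun s => Real.arctan (f s)) (1 / (1 + f t ^ 2) * f' t) t :=
        (Real.hasDerivAt_arctan (f t)).comp t (hf t ht)
      have h2 : HasDerivAt (fun s : ℝ => ((n : ℝ) / 2) * s) ((n : ℝ) / 2) t := by
        simpa using (hasDerivAt_id t).const_mul ((n : ℝ) / 2)
      exact h1.add h2
    have hderiv_nonpos : ∀ t ∈ Set.Icc (-l) l,
        1 / (1 + f t ^ 2) * f' t + (n : ℝ) / 2 ≤ 0 := by
      intro t ht
      have hpos : (0 : ℝ) < 1 + f t ^ 2 := by positivity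
      have h := hineq t ht
      have hle : f' t ≤ -((n : ℝ) / 2) * (1 + f t ^ 2) := by nlinarith
      rw [div_mul_eq_mul_div, one_mul]
      have : f' t / (1 + f t ^ 2) ≤ -((n : ℝ) / 2) := by
        rw [div_le_iff₀ hpos]
        nlinarith
      linarith
    have hanti : AntitoneOn g (Set.Icc (-l) l) := by
      apply antitoneOn_of_deriv_nonpos (convex_Icc _ _)
      · exact fun t ht => (hgd t ht).continuousAt.continuousWithinAt
      · intro t ht
        rw [interior_Icc] at ht
        exact ((hgd t (Set.mem_Icc_of_Ioo ht)).differentiableAt).differentiableWithinAt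
      · intro t ht
        rw [interior_Icc] at ht
        have ht' : t ∈ Set.Icc (-l) l := Set.mem_Icc_of_Ioo ht
        rw [(hgd t ht').deriv]
        exact hderiv_nonpos t ht'
    have hmem1 : (-l) ∈ Set.Icc (-l) l := by constructor <;> linarith
    have hmem2 : l ∈ Set.Icc (-l) l := by constructor <;> linarith
    have h := hanti hmem1 hmem2 (by linarith)
    -- g l ≤ g (-l) : arctan (f l) + (n/2) l ≤ arctan (f (-l)) - (n/2) l
    have hb1 : Real.arctan (f (-l)) < Real.pi / 2 := Real.arctan_lt_pi_div_two _
    have hb2 : -(Real.pi / 2) < Real.arctan (f l) := Real.neg_pi_div_two_lt_arctan _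
    simp only [hg, mul_neg] at h
    have hnl : (n : ℝ) * l < Real.pi := by nlinarith
    rw [lt_div_iff₀ hn0]
    nlinarith
  · intro l₀ hl₀ hl₀lt t ht
    have hcos : Real.cos ((n : ℝ) * t / 2) ≠ 0 := by
      apply Real.cos_ne_zero_iff.mpr
      -- |n t / 2| < π/2
      have hb : |(n : ℝ) * t / 2| < Real.pi / 2 := by
        have ht1 := ht.1
        have ht2 := ht.2
        rw [abs_lt]
        have : (n : ℝ) * l₀ < Real.pi := by
          rw [lt_div_iff₀ hn0] at hl₀lt; linarith
        constructor <;> nlinarith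
      intro k
      rw [abs_lt] at hb
      rcases lt_trichotomy k 0 with hk | hk | hk
      · have : (k : ℝ) ≤ -1 := by exact_mod_cast Int.le_sub_one_of_lt hk
        have hπ := Real.pi_pos
        intro he; nlinarith
      · subst hk; simp; intro he; nlinarith [Real.pi_pos]
      · have : (1 : ℝ) ≤ (k : ℝ) := by exact_mod_cast hk
        have hπ := Real.pi_pos
        intro he; nlinarith
    constructor
    · have h1 : HasDerivAt (fun s : ℝ => (n : ℝ) * s / 2) ((n : ℝ) / 2) t := by
        simpa using ((hasDerivAt_id t).const_mul (n : ℝ)).div_const 2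
      have h2 : HasDerivAt Real.tan (1 / Real.cos ((n : ℝ) * t / 2) ^ 2)
          ((n : ℝ) * t / 2) := Real.hasDerivAt_tan hcos
      have h3 := (h2.comp t h1).neg
      have he : 1 / Real.cos ((n : ℝ) * t / 2) ^ 2 = 1 + Real.tan ((n : ℝ) * t / 2) ^ 2 := by
        rw [← Real.inv_one_add_tan_sq hcos, one_div, inv_inv]
      have := h3
      rw [he] at this
      exact this.congr_deriv (by ring)
    · ring
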